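/- For every n ≥ 1, φ(P_n) = P_n; that is, the Links–Gould polynomial LG_{AS(n)}(s,q) of each Allen–Swenberg link is invariant under the substitution s ↦ q^{-1}s^{-1}. -/

import Mathlib

noncomputable section

open LaurentPolynomial

/-- `ℤ[q^{±1}]`, the ring of Laurent polynomials over `ℤ` in the variable `q`. -/
abbrev Rq : Type := LaurentPolynomial ℤ

/-- `R = ℤ[q^{±1}, s^{±1}]`, realized as Laurent polynomials in `s`
with coefficients in `ℤ[q^{±1}]`. -/
abbrev R2 : Type := LaurentPolynomial Rq

/-- The variable `q` of `R`. -/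
def q : R2 := C (T 1)
/-- The inverse `q⁻¹` of the variable `q`. -/
def qi : R2 := C (T (-1))
/-- The variable `s` of `R`. -/
def s : R2 := T 1
/-- The inverse `s⁻¹` of the variable `s`. -/
def si : R2 := T (-1)

/-- The coefficient of `s^k` in `f`, an element of `ℤ[q^{±1}]`. -/
def sCoeff (f : R2) (k : ℤ) : Rq := AddMonoidAlgebra.coeff f k
/-- The coefficient of `q^k` in `g ∈ ℤ[q^{±1}]`. -/
def qCoeff (g : Rq) (k : ℤ) : ℤ := AddMonoidAlgebra.coeff g k

/-- `deg_s f = d`: the largest exponent of `s` occurring in `f` is `d`. -/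
def sDegIs (f : R2) (d : ℤ) : Prop :=
  sCoeff f d ≠ 0 ∧ ∀ k : ℤ, d < k → sCoeff f k = 0

/-- `ldeg_s f = d`: the smallest exponent of `s` occurring in `f` is `d`. -/
def sLdegIs (f : R2) (d : ℤ) : Prop :=
  sCoeff f d ≠ 0 ∧ ∀ k : ℤ, k < d → sCoeff f k = 0

/-- `g ∈ ℤ[q^{±1}]` has `q`-degree `m` with leading coefficient `c`. -/
def qLeadIs (g : Rq) (m : ℤ) (c : ℤ) : Prop :=
  qCoeff g m = c ∧ c ≠ 0 ∧ ∀ k : ℤ, m < k → qCoeff g k = 0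

/-- Vectors in the free module `R^3` with basis `e1, e2, e3`. -/
abbrev V3 : Type := R2 × R2 × R2

/-- `e1 ⊠ e3 = aCoef · e1` where `aCoef = q^{-1}(s − s^{-1})(qs − q^{-1}s^{-1})`. -/
def aCoef : R2 := qi * (s - si) * (q * s - qi * si)
/-- `e1`-component of `e3 ⊠ e3`. -/
def X1 : R2 := (s^2 + qi^2*si^2) * (1 + qi^2) - 3*qi^2 - qi^4
/-- `e2`-component of `e3 ⊠ e3`. -/
def X2 : R2 := -(s^4 + qi^4*si^4) + (s^2 + qi^2*si^2) * (3 + qi^2) - 2 - 4*qi^2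
/-- `e3`-component of `e3 ⊠ e3`. -/
def X3 : R2 := 2*(s^2 + qi^2*si^2) - 3 - qi^2

/-- The commutative bilinear product `⊠` on `R^3` determined by
`e1⊠e1 = 0`, `e1⊠e2 = e1`, `e2⊠e2 = e2`, `e2⊠e3 = e3`, `e1⊠e3 = aCoef·e1`,
`e3⊠e3 = X1·e1 + X2·e2 + X3·e3`. -/
def boxt (u v : V3) : V3 :=
  (u.1 * v.2.1 + u.2.1 * v.1 + aCoef * (u.1 * v.2.2 + u.2.2 * v.1) + X1 * (u.2.2 * v.2.2),
   u.2.1 * v.2.1 + X2 * (u.2.2 * v.2.2),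
   u.2.1 * v.2.2 + u.2.2 * v.2.1 + X3 * (u.2.2 * v.2.2))

/-- First component of `TT⁺`. -/
def TTp1 : R2 :=
  (s^2 + qi^2*si^2) * (1 - 2*qi^2 + 2*qi^4 - 2*qi^6 + 4*qi^8 - 2*qi^10)
    - 2 + 3*qi^2 - 4*qi^4 + 4*qi^6 - 8*qi^8 + 4*qi^10
/-- Second component of `TT⁺`. -/
def TTp2 : R2 :=
  (s^4 + qi^4*si^4) * (2 - 2*qi^2 - 4*qi^6 + 4*qi^8)
    + (s^2 + qi^2*si^2) * (-5 + 4*qi^2 + 12*qi^6 - 8*qi^8 - 4*qi^10)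
    + 4 + 3*qi^2 - 6*qi^4 - 6*qi^6 - 8*qi^8 + 16*qi^10
/-- Third component of `TT⁺`. -/
def TTp3 : R2 :=
  (s^2 + qi^2*si^2) * (2*qi^2 - 2*qi^4 + 2*qi^6 - 4*qi^8 + 2*qi^10)
    + 1 - 4*qi^2 + 4*qi^4 - 4*qi^6 + 8*qi^8 - 4*qi^10
/-- First component of `TT⁻`. -/
def TTm1 : R2 :=
  (s^2 + qi^2*si^2) * (q^2 - 2 + 2*qi^2 - 2*qi^4 + 4*qi^6 - 2*qi^8)
    - 1 + 4*qi^2 - 4*qi^4 + 4*qi^6 - 8*qi^8 + 4*qi^10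
/-- Second component of `TT⁻`. -/
def TTm2 : R2 :=
  (s^4 + qi^4*si^4) * (2*q^2 - 2 - 4*qi^4 + 4*qi^6)
    + (s^2 + qi^2*si^2) * (-3*q^2 - 4 + 8*qi^2 + 4*qi^4 + 8*qi^6 - 12*qi^8)
    + q^2 + 10 - 6*qi^2 - 6*qi^4 - 16*qi^6 + 8*qi^8 + 8*qi^10
/-- Third component of `TT⁻`. -/
def TTm3 : R2 :=
  (s^2 + qi^2*si^2) * (2 - 2*qi^2 + 2*qi^4 - 4*qi^6 + 2*qi^8)
    - q^2 - 4*qi^2 + 4*qi^4 - 4*qi^6 + 8*qi^8 - 4*qi^10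

/-- The vector `TT⁺ = TT⁺_1·e1 + TT⁺_2·e2 + TT⁺_3·e3`. -/
def TTp : V3 := (TTp1, TTp2, TTp3)
/-- The vector `TT⁻ = TT⁻_1·e1 + TT⁻_2·e2 + TT⁻_3·e3`. -/
def TTm : V3 := (TTm1, TTm2, TTm3)

/-- `T := TT⁺ ⊠ TT⁻`. -/
def Tvec : V3 := boxt TTp TTm

/-- Iterated powers `T^{⊠n}`: `T^{⊠1} = T` and `T^{⊠(n+1)} = T^{⊠n} ⊠ T`.
(`Tpow 0` is set to `e2`, which is a two-sided identity for `⊠`, so that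
`Tpow 1 = T` holds definitionally.) -/
def Tpow : ℕ → V3
  | 0 => (0, 1, 0)
  | n + 1 => boxt (Tpow n) Tvec

/-- `AS*(e1)`, the Links–Gould polynomial of the connected sum of two Hopf links. -/
def AS1 : R2 :=
  (s^6 + qi^6*si^6) - (s^4 + qi^4*si^4) * (1 + qi^2)
    + (s^2 + qi^2*si^2) * (1 + 2*qi^2) - 1 - 2*qi^2 - qi^4
/-- `AS*(e2)`. -/
def AS2 : R2 :=
  (s^4 + qi^4*si^4) - (s^2 + qi^2*si^2) * (2 + 2*qi^2) + 1 + 4*qi^2 + qi^4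
/-- `AS*(e3)`. -/
def AS3 : R2 :=
  (s^6 + qi^6*si^6) * (3 + qi^2) - (s^4 + qi^4*si^4) * (7 + 8*qi^2 + qi^4)
    + (s^2 + qi^2*si^2) * (7 + 18*qi^2 + 7*qi^4) - 3 - 18*qi^2 - 17*qi^4 - 2*qi^6

/-- The `R`-linear map `AS* : R^3 → R`. -/
def ASstar (u : V3) : R2 := u.1 * AS1 + u.2.1 * AS2 + u.2.2 * AS3

/-- `P_n := AS*(T^{⊠n})`, the Links–Gould polynomial of the `n`-th Allen–Swenberg link. -/
def P (n : ℕ) : R2 := ASstar (Tpow n)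

/-- for every `n ≥ 1`, `φ(P_n) = P_n`: the Links–Gould polynomial
`LG_{AS(n)}(s,q)` is invariant under the substitution `s ↦ q⁻¹s⁻¹`. -/
theorem P_invariant_under_involution (φ : R2 ≃+* R2)
    (hq : φ q = q) (hs : φ s = qi * si) :
    ∀ n : ℕ, 1 ≤ n → φ (P n) = P n := by
  have hqqi : q * qi = 1 := by
    rw [q, qi, ← map_mul, ← T_add]
    norm_num
  have hssi : s * si = 1 := by
    rw [s, si, ← T_add]
    norm_num
  have h1 : q * φ qi = 1 := by rw [← hq, ← map_mul, hqqi, map_one]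
  have hqi : φ qi = qi := by linear_combination qi * h1 - φ qi * hqqi
  have h2 : (qi * si) * φ si = 1 := by rw [← hs, ← map_mul, hssi, map_one]
  have hsi : φ si = q * s := by
    linear_combination q * s * h2 - φ si * s * si * hqqi - φ si * hssi
  have haC : φ aCoef = aCoef := by
    simp only [aCoef, map_mul, map_sub, hq, hs, hqi, hsi]
    linear_combination (qi^2*si^2 - qi^2*s*si - q*qi*s*si + q*qi*s^2) * hqqi
  have hX1 : φ X1 = X1 := by
    simp only [X1, map_add, map_sub, map_mul, map_pow, map_neg, map_one, map_ofNat, hq, hs, hqi, hsi]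
    linear_combination (s^2 + qi^2*s^2 + q*qi*s^2 + q*qi^3*s^2) * hqqi
  have hX2 : φ X2 = X2 := by
    simp only [X2, map_add, map_sub, map_mul, map_pow, map_neg, map_one, map_ofNat, hq, hs, hqi, hsi]
    linear_combination (3*s^2 - s^4 + qi^2*s^2 + 3*q*qi*s^2 - q*qi*s^4 + q*qi^3*s^2 - q^2*qi^2*s^4 - q^3*qi^3*s^4) * hqqi
  have hX3 : φ X3 = X3 := by
    simp only [X3, map_add, map_sub, map_mul, map_pow, map_neg, map_one, map_ofNat, hq, hs, hqi, hsi]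
    linear_combination (2*s^2 + 2*q*qi*s^2) * hqqi
  have hTTp1 : φ TTp1 = TTp1 := by
    simp only [TTp1, map_add, map_sub, map_mul, map_pow, map_neg, map_one, map_ofNat, hq, hs, hqi, hsi]
    linear_combination (s^2 - 2*qi^2*s^2 + 2*qi^4*s^2 - 2*qi^6*s^2 + 4*qi^8*s^2 - 2*qi^10*s^2 + q*qi*s^2 - 2*q*qi^3*s^2 + 2*q*qi^5*s^2 - 2*q*qi^7*s^2 + 4*q*qi^9*s^2 - 2*q*qi^11*s^2) * hqqi
  have hTTp2 : φ TTp2 = TTp2 := by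
    simp only [TTp2, map_add, map_sub, map_mul, map_pow, map_neg, map_one, map_ofNat, hq, hs, hqi, hsi]
    linear_combination (-5*s^2 + 2*s^4 + 4*qi^2*s^2 - 2*qi^2*s^4 + 12*qi^6*s^2 - 4*qi^6*s^4 - 8*qi^8*s^2 + 4*qi^8*s^4 - 4*qi^10*s^2 - 5*q*qi*s^2 + 2*q*qi*s^4 + 4*q*qi^3*s^2 - 2*q*qi^3*s^4 + 12*q*qi^7*s^2 - 4*q*qi^7*s^4 - 8*q*qi^9*s^2 + 4*q*qi^9*s^4 - 4*q*qi^11*s^2 + 2*q^2*qi^2*s^4 - 2*q^2*qi^4*s^4 - 4*q^2*qi^8*s^4 + 4*q^2*qi^10*s^4 + 2*q^3*qi^3*s^4 - 2*q^3*qi^5*s^4 - 4*q^3*qi^9*s^4 + 4*q^3*qi^11*s^4) * hqqi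
  have hTTp3 : φ TTp3 = TTp3 := by
    simp only [TTp3, map_add, map_sub, map_mul, map_pow, map_neg, map_one, map_ofNat, hq, hs, hqi, hsi]
    linear_combination (2*qi^2*s^2 - 2*qi^4*s^2 + 2*qi^6*s^2 - 4*qi^8*s^2 + 2*qi^10*s^2 + 2*q*qi^3*s^2 - 2*q*qi^5*s^2 + 2*q*qi^7*s^2 - 4*q*qi^9*s^2 + 2*q*qi^11*s^2) * hqqi
  have hTTm1 : φ TTm1 = TTm1 := by
    simp only [TTm1, map_add, map_sub, map_mul, map_pow, map_neg, map_one, map_ofNat, hq, hs, hqi, hsi]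
    linear_combination (-2*s^2 + 2*qi^2*s^2 - 2*qi^4*s^2 + 4*qi^6*s^2 - 2*qi^8*s^2 - 2*q*qi*s^2 + 2*q*qi^3*s^2 - 2*q*qi^5*s^2 + 4*q*qi^7*s^2 - 2*q*qi^9*s^2 + q^2*s^2 + q^3*qi*s^2) * hqqi
  have hTTm2 : φ TTm2 = TTm2 := by
    simp only [TTm2, map_add, map_sub, map_mul, map_pow, map_neg, map_one, map_ofNat, hq, hs, hqi, hsi]
    linear_combination (-4*s^2 - 2*s^4 + 8*qi^2*s^2 + 4*qi^4*s^2 - 4*qi^4*s^4 + 8*qi^6*s^2 + 4*qi^6*s^4 - 12*qi^8*s^2 - 4*q*qi*s^2 - 2*q*qi*s^4 + 8*q*qi^3*s^2 + 4*q*qi^5*s^2 - 4*q*qi^5*s^4 + 8*q*qi^7*s^2 + 4*q*qi^7*s^4 - 12*q*qi^9*s^2 - 3*q^2*s^2 + 2*q^2*s^4 - 2*q^2*qi^2*s^4 - 4*q^2*qi^6*s^4 + 4*q^2*qi^8*s^4 - 3*q^3*qi*s^2 + 2*q^3*qi*s^4 - 2*q^3*qi^3*s^4 - 4*q^3*qi^7*s^4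 + 4*q^3*qi^9*s^4 + 2*q^4*qi^2*s^4 + 2*q^5*qi^3*s^4) * hqqi
  have hTTm3 : φ TTm3 = TTm3 := by
    simp only [TTm3, map_add, map_sub, map_mul, map_pow, map_neg, map_one, map_ofNat, hq, hs, hqi, hsi]
    linear_combination (2*s^2 - 2*qi^2*s^2 + 2*qi^4*s^2 - 4*qi^6*s^2 + 2*qi^8*s^2 + 2*q*qi*s^2 - 2*q*qi^3*s^2 + 2*q*qi^5*s^2 - 4*q*qi^7*s^2 + 2*q*qi^9*s^2) * hqqi
  have hAS1 : φ AS1 = AS1 := by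
    simp only [AS1, map_add, map_sub, map_mul, map_pow, map_neg, map_one, map_ofNat, hq, hs, hqi, hsi]
    linear_combination (s^2 - s^4 + s^6 + 2*qi^2*s^2 - qi^2*s^4 + q*qi*s^2 - q*qi*s^4 + q*qi*s^6 + 2*q*qi^3*s^2 - q*qi^3*s^4 - q^2*qi^2*s^4 + q^2*qi^2*s^6 - q^2*qi^4*s^4 - q^3*qi^3*s^4 + q^3*qi^3*s^6 - q^3*qi^5*s^4 + q^4*qi^4*s^6 + q^5*qi^5*s^6) * hqqi
  have hAS2 : φ AS2 = AS2 := by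
    simp only [AS2, map_add, map_sub, map_mul, map_pow, map_neg, map_one, map_ofNat, hq, hs, hqi, hsi]
    linear_combination (-2*s^2 + s^4 - 2*qi^2*s^2 - 2*q*qi*s^2 + q*qi*s^4 - 2*q*qi^3*s^2 + q^2*qi^2*s^4 + q^3*qi^3*s^4) * hqqi
  have hAS3 : φ AS3 = AS3 := by
    simp only [AS3, map_add, map_sub, map_mul, map_pow, map_neg, map_one, map_ofNat, hq, hs, hqi, hsi]
    linear_combination (7*s^2 - 7*s^4 + 3*s^6 + 18*qi^2*s^2 - 8*qi^2*s^4 + qi^2*s^6 + 7*qi^4*s^2 - qi^4*s^4 + 7*q*qi*s^2 - 7*q*qi*s^4 + 3*q*qi*s^6 + 18*q*qi^3*s^2 - 8*q*qi^3*s^4 + q*qi^3*s^6 + 7*q*qi^5*s^2 - q*qi^5*s^4 - 7*q^2*qi^2*s^4 + 3*q^2*qi^2*s^6 - 8*q^2*qi^4*s^4 + q^2*qi^4*s^6 - q^2*qi^6*s^4 - 7*q^3*qi^3*s^4 + 3*q^3*qi^3*s^6 - 8*q^3*qi^5*s^4 + q^3*qi^5*s^6 - q^3*qi^7*s^4 +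 3*q^4*qi^4*s^6 + q^4*qi^6*s^6 + 3*q^5*qi^5*s^6 + q^5*qi^7*s^6) * hqqi
  have hbox : ∀ u v : V3,
      (φ u.1 = u.1 ∧ φ u.2.1 = u.2.1 ∧ φ u.2.2 = u.2.2) →
      (φ v.1 = v.1 ∧ φ v.2.1 = v.2.1 ∧ φ v.2.2 = v.2.2) →
      (φ (boxt u v).1 = (boxt u v).1 ∧ φ (boxt u v).2.1 = (boxt u v).2.1 ∧
        φ (boxt u v).2.2 = (boxt u v).2.2) := by
    rintro u v ⟨a1, a2, a3⟩ ⟨b1, b2, b3⟩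
    refine ⟨?_, ?_, ?_⟩ <;>
      simp only [boxt, map_add, map_mul, a1, a2, a3, b1, b2, b3, haC, hX1, hX2, hX3]
  have hpow : ∀ n : ℕ, φ (Tpow n).1 = (Tpow n).1 ∧ φ (Tpow n).2.1 = (Tpow n).2.1 ∧
      φ (Tpow n).2.2 = (Tpow n).2.2 := by
    intro n
    induction n with
    | zero => exact ⟨map_zero φ, map_one φ, map_zero φ⟩
    | succ n ih =>
      exact hbox _ _ ih (hbox TTp TTm ⟨hTTp1, hTTp2, hTTp3⟩ ⟨hTTm1, hTTm2, hTTm3⟩)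
  intro n _
  obtain ⟨c1, c2, c3⟩ := hpow n
  simp only [P, ASstar, map_add, map_mul, c1, c2, c3, hAS1, hAS2, hAS3]
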